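/- The Cayley-Dickson twist γ is proper: for all nonnegative integers p,q (with group operation bitwise xor, so each element is its own inverse), γ(p,q)γ(q,q) = γ(p xor q, q) and γ(p,p)γ(p,q) = γ(p, p xor q). -/

import Mathlib

/-- The Cayley–Dickson twist on ℕ (group operation: bitwise xor), defined by the
recursion γ(0,0)=1, γ(2r,2s)=γ(r,s), γ(2r,2s+1)=-γ(r,s) for r≠0, γ(0,2s+1)=1,
γ(2r+1,2s)=γ(s,r), γ(2r+1,2s+1)=γ(s,r) for r≠0, γ(1,2s+1)=-1. -/
def cd (p q : ℕ) : ℤ :=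
  if hp2 : p % 2 = 0 then
    if hq2 : q % 2 = 0 then
      if hpq : p = 0 ∧ q = 0 then 1
      else cd (p / 2) (q / 2)
    else
      if hp : p = 0 then 1 else -cd (p / 2) (q / 2)
  else
    if hq2 : q % 2 = 0 then cd (q / 2) (p / 2)
    else if hp : p = 1 then -1 else cd (q / 2) (p / 2)
termination_by p + q
decreasing_by all_goals omega

lemma hdiv (s : ℕ) : (2*s+1)/2 = s := by omega
lemma cd00 : cd 0 0 = 1 := by rw [cd]; simp
lemma cd_ee (r s : ℕ) (h : ¬(r = 0 ∧ s = 0)) : cd (2*r) (2*s) = cd r s := by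
  rw [cd]; simp [Nat.mul_div_cancel_left, Nat.mul_mod_right]; omega
lemma cd_eo (r s : ℕ) (h : r ≠ 0) : cd (2*r) (2*s+1) = -cd r s := by
  rw [cd]; simp [Nat.mul_div_cancel_left, Nat.mul_mod_right, Nat.mul_add_mod, hdiv, h]
lemma cd_0o (s : ℕ) : cd 0 (2*s+1) = 1 := by
  rw [cd]; simp [Nat.mul_add_mod]
lemma cd_oe (r s : ℕ) : cd (2*r+1) (2*s) = cd s r := by
  rw [cd]; simp [Nat.mul_div_cancel_left, Nat.mul_mod_right, Nat.mul_add_mod, hdiv]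
lemma cd_oo (r s : ℕ) (h : r ≠ 0) : cd (2*r+1) (2*s+1) = cd s r := by
  rw [cd]; simp [Nat.mul_add_mod, hdiv]; omega
lemma cd_1o (s : ℕ) : cd 1 (2*s+1) = -1 := by
  rw [cd]; simp [Nat.mul_add_mod]

lemma xee (a b : ℕ) : (2*a) ^^^ (2*b) = 2*(a^^^b) := by
  simpa [Nat.bit_val, mul_comm] using Nat.xor_bit false a false b
lemma xeo (a b : ℕ) : (2*a) ^^^ (2*b+1) = 2*(a^^^b)+1 := by
  simpa [Nat.bit_val, mul_comm] using Nat.xor_bit false a true b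
lemma xoe (a b : ℕ) : (2*a+1) ^^^ (2*b) = 2*(a^^^b)+1 := by
  simpa [Nat.bit_val, mul_comm] using Nat.xor_bit true a false b
lemma xoo (a b : ℕ) : (2*a+1) ^^^ (2*b+1) = 2*(a^^^b) := by
  simpa [Nat.bit_val, mul_comm] using Nat.xor_bit true a true b

lemma cd_zero_left (q : ℕ) : cd 0 q = 1 := by
  induction q using Nat.strong_induction_on with
  | _ q ih =>
    obtain ⟨s, rfl | rfl⟩ := Nat.even_or_odd' q
    · rcases Nat.eq_zero_or_pos s with rfl | hs
      · simpa using cd00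
      · have h := cd_ee 0 s (by omega)
        rw [show (2:ℕ)*0 = 0 by omega] at h
        rw [h]; exact ih s (by omega)
    · exact cd_0o s

lemma cd_zero_right (p : ℕ) : cd p 0 = 1 := by
  induction p using Nat.strong_induction_on with
  | _ p ih =>
    obtain ⟨r, rfl | rfl⟩ := Nat.even_or_odd' p
    · rcases Nat.eq_zero_or_pos r with rfl | hr
      · simpa using cd00
      · have h := cd_ee r 0 (by omega)
        rw [show (2:ℕ)*0 = 0 by omega] at h
        rw [h]; exact ih r (by omega)
    · have h := cd_oe r 0
      rw [show (2:ℕ)*0 = 0 by omega] at h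
      rw [h]; exact cd_zero_left r

lemma cd_diag (q : ℕ) (hq : q ≠ 0) : cd q q = -1 := by
  induction q using Nat.strong_induction_on with
  | _ q ih =>
    obtain ⟨s, rfl | rfl⟩ := Nat.even_or_odd' q
    · rw [cd_ee s s (by omega)]; exact ih s (by omega) (by omega)
    · rcases Nat.eq_zero_or_pos s with rfl | hs
      · simpa using cd_1o 0
      · rw [cd_oo s s (by omega)]; exact ih s (by omega) (by omega)

lemma cd_antisymm : ∀ n a b : ℕ, a + b ≤ n → a ≠ b → a ≠ 0 → b ≠ 0 →
    cd a b = -cd b a := by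
  intro n
  induction n using Nat.strong_induction_on with
  | _ n ih =>
    intro a b hn hab ha hb
    obtain ⟨r, rfl | rfl⟩ := Nat.even_or_odd' a <;>
      obtain ⟨s, rfl | rfl⟩ := Nat.even_or_odd' b
    · rw [cd_ee r s (by omega), cd_ee s r (by omega)]
      exact ih (r+s) (by omega) r s le_rfl (by omega) (by omega) (by omega)
    · rw [cd_eo r s (by omega), cd_oe s r]
    · rw [cd_oe r s, cd_eo s r (by omega)]; ring
    · rcases Nat.eq_zero_or_pos r with rfl | hr
      · have hs : s ≠ 0 := by omega
        rw [show (2:ℕ)*0+1 = 1 by omega, cd_1o s, cd_oo s 0 hs,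
          cd_zero_left s]
      · rcases Nat.eq_zero_or_pos s with rfl | hs
        · rw [show (2:ℕ)*0+1 = 1 by omega, cd_1o r, cd_oo r 0 (by omega),
            cd_zero_left r]; norm_num
        · rw [cd_oo r s (by omega), cd_oo s r (by omega)]
          have := ih (r+s) (by omega) r s le_rfl (by omega) (by omega) (by omega)
          rw [this]; ring

lemma cd_key : ∀ n p q : ℕ, p + q ≤ n →
    (q ≠ 0 → cd (p ^^^ q) q = -cd p q) ∧ (p ≠ 0 → cd p (p ^^^ q) = -cd p q) := by
  intro n
  induction n using Nat.strong_induction_on with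
  | _ n ih =>
    intro p q hn
    obtain ⟨a, rfl | rfl⟩ := Nat.even_or_odd' p <;>
      obtain ⟨b, rfl | rfl⟩ := Nat.even_or_odd' q
    · -- p = 2a, q = 2b
      constructor
      · intro hq
        have hb : b ≠ 0 := by omega
        rw [xee, cd_ee a b (by omega), cd_ee (a^^^b) b (by omega)]
        exact (ih (a+b) (by omega) a b le_rfl).1 hb
      · intro hp
        have ha : a ≠ 0 := by omega
        rw [xee, cd_ee a b (by omega), cd_ee a (a^^^b) (by omega)]
        exact (ih (a+b) (by omega) a b le_rfl).2 ha
    · -- p = 2a, q = 2b+1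
      constructor
      · intro _
        rcases Nat.eq_zero_or_pos a with rfl | ha
        · rw [show (2:ℕ)*0 = 0 by omega, Nat.zero_xor, cd_zero_left,
            cd_diag (2*b+1) (by omega)]
        · rw [xeo, cd_eo a b (by omega)]
          by_cases hab : a = b
          · subst hab
            rw [Nat.xor_self, show (2:ℕ)*0+1 = 1 by omega, cd_1o a,
              cd_diag a (by omega)]; ring
          · have hxab : a ^^^ b ≠ 0 := fun h => hab (xor_eq_zero_iff.mp h)
            rw [cd_oo (a^^^b) b hxab]
            rcases Nat.eq_zero_or_pos b with rfl | hb
            · rw [Nat.xor_zero, cd_zero_left, cd_zero_right]; norm_num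
            · have h1 := (ih (b+a) (by omega) b a le_rfl).2 (by omega)
              rw [Nat.xor_comm a b, h1,
                cd_antisymm (b+a) b a le_rfl (by omega) (by omega) (by omega)]
      · intro hp
        have ha : a ≠ 0 := by omega
        rw [xeo, cd_eo a b ha, cd_eo a (a^^^b) ha,
          (ih (a+b) (by omega) a b le_rfl).2 ha]
    · -- p = 2a+1, q = 2b
      constructor
      · intro hq
        have hb : b ≠ 0 := by omega
        rw [xoe, cd_oe a b, cd_oe (a^^^b) b, Nat.xor_comm a b]
        exact (ih (b+a) (by omega) b a le_rfl).2 hb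
      · intro _
        rcases Nat.eq_zero_or_pos a with rfl | ha
        · rw [xoe, Nat.zero_xor, show (2:ℕ)*0+1 = 1 by omega, cd_1o b,
            cd_oe 0 b, cd_zero_right]
        · rw [xoe, cd_oe a b, cd_oo a (a^^^b) (by omega), Nat.xor_comm a b]
          exact (ih (b+a) (by omega) b a le_rfl).1 (by omega)
    · -- p = 2a+1, q = 2b+1
      constructor
      · intro _
        rcases Nat.eq_zero_or_pos a with rfl | ha
        · rw [xoo, Nat.zero_xor, show (2:ℕ)*0+1 = 1 by omega, cd_1o b]
          rcases Nat.eq_zero_or_pos b with rfl | hb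
          · rw [show (2:ℕ)*0 = 0 by omega, cd_0o 0]; norm_num
          · rw [cd_eo b b (by omega), cd_diag b (by omega)]
        · rw [xoo, cd_oo a b (by omega)]
          by_cases hab : a = b
          · subst hab
            rw [Nat.xor_self, show (2:ℕ)*0 = 0 by omega, cd_0o a,
              cd_diag a (by omega)]; ring
          · have hxab : a ^^^ b ≠ 0 := fun h => hab (xor_eq_zero_iff.mp h)
            rw [cd_eo (a^^^b) b hxab]
            rcases Nat.eq_zero_or_pos b with rfl | hb
            · rw [Nat.xor_zero, cd_zero_right, cd_zero_left]
            · rw [(ih (a+b) (by omega) a b le_rfl).1 (by omega),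
                cd_antisymm (a+b) a b le_rfl hab (by omega) (by omega)]
              ring
      · intro _
        rcases Nat.eq_zero_or_pos a with rfl | ha
        · rw [xoo, Nat.zero_xor, show (2:ℕ)*0+1 = 1 by omega, cd_1o b,
            cd_oe 0 b, cd_zero_right]; norm_num
        · rw [xoo, cd_oo a b (by omega), cd_oe a (a^^^b), Nat.xor_comm a b]
          exact (ih (b+a) (by omega) b a le_rfl).1 (by omega)

theorem stmt15 : ∀ p q : ℕ,
    cd p q * cd q q = cd (p ^^^ q) q ∧ cd p p * cd p q = cd p (p ^^^ q) := by
  intro p q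
  constructor
  · rcases Nat.eq_zero_or_pos q with rfl | hq
    · rw [cd00, Nat.xor_zero, mul_one]
    · rw [cd_diag q (by omega), (cd_key (p+q) p q le_rfl).1 (by omega)]; ring
  · rcases Nat.eq_zero_or_pos p with rfl | hp
    · rw [cd00, Nat.zero_xor, one_mul]
    · rw [cd_diag p (by omega), (cd_key (p+q) p q le_rfl).2 (by omega)]; ring
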